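/- arXiv:2101.03304 — 4 statements merged into one kernel-verified Lean document; each statement's English description precedes it below -/
import Mathlib

section
/- For every real-valued signal f : Ω → ℝ there exists an integer-valued signal g : Ω → ℤ such that (i) |Hf[0,1] − Hg[0,1]| ≤ 2^{−N−1}, (ii) |Hf[k,j] − Hg[k,j]| ≤ 2^{−N+(k−1)/2} for all (k,j) ∈ Ω̂ with k ≥ 1, and (iii) sup_{t∈Ω} |f(t) − g(t)| ≤ 1 − 2^{−N−1} < 1. -/
open Finset Real

noncomputable section

/-- The time points `t[n] = -1/2 + (2n-1)/2^(N+1)` for `n = 1, …, 2^N`. -/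
def tpt (N n : ℕ) : ℝ := -(1/2) + (2*(n:ℝ) - 1) / 2^(N+1)

/-- The Haar index points `P[k,j] = -1/2 + (2j-1)/2^k`. -/
def Ppt (k j : ℕ) : ℝ := -(1/2) + (2*(j:ℝ) - 1) / 2^k

/-- The mother Haar function `Haar[1,1]`. -/
def haar11 (t : ℝ) : ℝ :=
  if 0 < t ∧ t < 1/2 then 1 else if -(1/2) < t ∧ t < 0 then -1 else 0

/-- The Haar functions: `haar 0 1 = 1` and
`haar k j t = 2^((k-1)/2) * haar11 (2^(k-1) (t - P[k,j]))` for `k ≥ 1`. -/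
def haar (k j : ℕ) (t : ℝ) : ℝ :=
  if k = 0 then 1
  else (2:ℝ) ^ (((k:ℝ) - 1) / 2) * haar11 ((2:ℝ)^(k-1) * (t - Ppt k j))

/-- The inner product `⟨f,g⟩ = 2^{-N} ∑_{n=1}^{2^N} f[n] g[n]`. -/
def innerOmega (N : ℕ) (f g : ℕ → ℝ) : ℝ :=
  (1 / 2^N) * ∑ n ∈ Finset.Icc 1 (2^N), f n * g n

/-- The Haar transform `Hf[k,j] = ⟨Haar[k,j], f⟩`. -/
def Htrans (N : ℕ) (f : ℕ → ℝ) (k j : ℕ) : ℝ :=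
  innerOmega N (fun n => haar k j (tpt N n)) f

/-- The discrete Fourier transform `Ff[ξ] = 2^{-N} ∑_{n=1}^{2^N} e^{-2πi t[n] ξ} f[n]`. -/
def Ftrans (N : ℕ) (f : ℕ → ℝ) (ξ : ℤ) : ℂ :=
  (1 / 2^N : ℂ) * ∑ n ∈ Finset.Icc 1 (2^N),
    Complex.exp (-(2 * (Real.pi : ℂ) * Complex.I) * (tpt N n : ℂ) * (ξ : ℂ)) * (f n : ℂ)


def Sq (N : ℕ) (f : ℕ → ℝ) (k j : ℕ) : ℝ :=
  ∑ n ∈ Finset.Ioc ((j-1) * 2^(N-k)) (j * 2^(N-k)), f n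

def Tq (N : ℕ) (f : ℕ → ℝ) : ℕ → ℕ → ℤ
  | 0, _ => round (Sq N f 0 1)
  | _+1, 0 => 0
  | k+1, j+1 =>
    if j % 2 = 0 then
      round (Sq N f (k+1) (j+1) - (Sq N f k ((j+2)/2) - (Tq N f k ((j+2)/2) : ℝ)) / 2)
    else Tq N f k ((j+1)/2) - Tq N f (k+1) j
termination_by k j => (k, j)

lemma Tq_odd (N : ℕ) (f : ℕ → ℝ) (k i : ℕ) (hi : 1 ≤ i) :
    Tq N f (k+1) (2*i-1) =
      round (Sq N f (k+1) (2*i-1) - (Sq N f k i - (Tq N f k i : ℝ)) / 2) := by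
  have h1 : 2*i-1 = (2*i-2) + 1 := by omega
  rw [h1, Tq]
  have h2 : (2*i-2) % 2 = 0 := by omega
  have h3 : (2*i-2+2)/2 = i := by omega
  simp only [h2, if_pos, h3]

lemma Tq_even (N : ℕ) (f : ℕ → ℝ) (k i : ℕ) (hi : 1 ≤ i) :
    Tq N f (k+1) (2*i) = Tq N f k i - Tq N f (k+1) (2*i-1) := by
  have h1 : 2*i = (2*i-1) + 1 := by omega
  rw [h1, Tq]
  have h2 : (2*i-1) % 2 = 1 := by omega
  have h3 : (2*i-1+1)/2 = i := by omega
  simp only [h2, h3, Nat.add_sub_cancel]; norm_num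

lemma Sq_split (N : ℕ) (f : ℕ → ℝ) (k j : ℕ) (hk : k < N) (hj : 1 ≤ j) :
    Sq N f k j = Sq N f (k+1) (2*j-1) + Sq N f (k+1) (2*j) := by
  unfold Sq
  have hm : N - k = (N - (k+1)) + 1 := by omega
  set m := N - (k+1) with hmdef
  have e1 : (2*j-1-1) * 2^m = (j-1) * 2^(m+1) := by
    rw [show 2*j-1-1 = 2*(j-1) by omega, pow_succ]; ring
  have e2 : (2*j) * 2^m = j * 2^(m+1) := by rw [pow_succ]; ring
  have e3 : (2*j-1) * 2^m ≤ (2*j) * 2^m := by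
    exact Nat.mul_le_mul_right _ (by omega)
  have e4 : (j-1) * 2^(m+1) ≤ (2*j-1) * 2^m := by
    rw [← e1]; exact Nat.mul_le_mul_right _ (by omega)
  rw [hm, e1, e2, ← Finset.sum_Ioc_consecutive _ e4 (by rw [← e2]; exact e3)]

lemma Sq_leaf (N : ℕ) (f : ℕ → ℝ) (n : ℕ) (hn : 1 ≤ n) : Sq N f N n = f n := by
  unfold Sq
  rw [Nat.sub_self]
  simp only [pow_zero, mul_one]
  rw [show Finset.Ioc (n-1) n = {n} by rw [← Finset.Icc_add_one_left_eq_Ioc, show n-1+1 = n by omega, Finset.Icc_self]]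
  simp

lemma Tq_split (N : ℕ) (f : ℕ → ℝ) (k j : ℕ) (hj : 1 ≤ j) :
    Tq N f k j = Tq N f (k+1) (2*j-1) + Tq N f (k+1) (2*j) := by
  rw [Tq_even N f k j hj]; ring

/-- Sum of leaf values over the dyadic block `(k,j)` equals `Tq k j`. -/
lemma Tq_sum (N : ℕ) (f : ℕ → ℝ) :
    ∀ d k j, k + d = N → 1 ≤ j →
      ∑ n ∈ Finset.Ioc ((j-1) * 2^(N-k)) (j * 2^(N-k)), Tq N f N n = Tq N f k j := by
  intro d
  induction d with
  | zero =>
    intro k j hk hj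
    have hkN : k = N := by omega
    subst hkN
    rw [Nat.sub_self]
    simp only [pow_zero, mul_one]
    rw [show Finset.Ioc (j-1) j = {j} by rw [← Finset.Icc_add_one_left_eq_Ioc, show j-1+1 = j by omega, Finset.Icc_self]]
    simp
  | succ d ih =>
    intro k j hk hj
    have hm : N - k = (N - (k+1)) + 1 := by omega
    set m := N - (k+1) with hmdef
    have e1 : (2*j-1-1) * 2^m = (j-1) * 2^(m+1) := by
      rw [show 2*j-1-1 = 2*(j-1) by omega, pow_succ]; ring
    have e2 : (2*j) * 2^m = j * 2^(m+1) := by rw [pow_succ]; ring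
    have e3 : (2*j-1) * 2^m ≤ (2*j) * 2^m := Nat.mul_le_mul_right _ (by omega)
    have e4 : (j-1) * 2^(m+1) ≤ (2*j-1) * 2^m := by
      rw [← e1]; exact Nat.mul_le_mul_right _ (by omega)
    have hbc : (2*j-1) * 2^m ≤ j * 2^(m+1) := le_of_le_of_eq e3 e2
    rw [hm, ← Finset.sum_Ioc_consecutive (fun n => Tq N f N n) e4 hbc]
    have h1 := ih (k+1) (2*j-1) (by omega) (by omega)
    have h2 := ih (k+1) (2*j) (by omega) (by omega)
    rw [show N - (k+1) = m from rfl, e1] at h1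
    rw [show N - (k+1) = m from rfl, e2] at h2
    rw [Tq_split N f k j hj, h1, h2]

/-- Children errors in terms of parent error. -/
lemma e_children (N : ℕ) (f : ℕ → ℝ) (k i : ℕ) (hk : k < N) (hi : 1 ≤ i) :
    ∃ r : ℝ, |r| ≤ 1/2 ∧
      Sq N f (k+1) (2*i-1) - (Tq N f (k+1) (2*i-1) : ℝ)
        = r + (Sq N f k i - (Tq N f k i : ℝ)) / 2 ∧
      Sq N f (k+1) (2*i) - (Tq N f (k+1) (2*i) : ℝ)
        = (Sq N f k i - (Tq N f k i : ℝ)) / 2 - r := by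
  set ep : ℝ := Sq N f k i - (Tq N f k i : ℝ) with hep
  set x : ℝ := Sq N f (k+1) (2*i-1) - ep / 2 with hx
  refine ⟨x - round x, abs_sub_round x, ?_, ?_⟩
  · rw [Tq_odd N f k i hi, ← hep, ← hx]; ring
  · have hsplit : Sq N f k i = Sq N f (k+1) (2*i-1) + Sq N f (k+1) (2*i) :=
      Sq_split N f k i hk hi
    have htsplit : (Tq N f k i : ℝ) = (Tq N f (k+1) (2*i-1) : ℝ) + (Tq N f (k+1) (2*i) : ℝ) := by
      rw [Tq_split N f k i hi]; push_cast; ring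
    have h1 : Sq N f (k+1) (2*i-1) - (Tq N f (k+1) (2*i-1) : ℝ) = (x - round x) + ep / 2 := by
      rw [Tq_odd N f k i hi, ← hep, ← hx]; ring
    have : ep = (Sq N f (k+1) (2*i-1) - (Tq N f (k+1) (2*i-1) : ℝ))
        + (Sq N f (k+1) (2*i) - (Tq N f (k+1) (2*i) : ℝ)) := by
      rw [hep, hsplit, htsplit]; ring
    rw [h1] at this; linarith

/-- The error bound `|e(k,j)| ≤ 1 - 2^{-(k+1)}`. -/
lemma e_bound (N : ℕ) (f : ℕ → ℝ) :
    ∀ k, k ≤ N → ∀ j, 1 ≤ j → j ≤ 2^k →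
      |Sq N f k j - (Tq N f k j : ℝ)| ≤ 1 - (1/2:ℝ)^(k+1) := by
  intro k
  induction k with
  | zero =>
    intro _ j hj1 hj2
    have hj : j = 1 := by omega
    subst hj
    have : Tq N f 0 1 = round (Sq N f 0 1) := by rw [Tq]
    rw [this]
    calc |Sq N f 0 1 - (round (Sq N f 0 1) : ℝ)| ≤ 1/2 := abs_sub_round _
    _ ≤ 1 - (1/2:ℝ)^(0+1) := by norm_num
  | succ k ih =>
    intro hk j hj1 hj2
    have hk' : k < N := by omega
    rcases Nat.even_or_odd j with ⟨i, hij⟩ | ⟨i, hij⟩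
    · -- j = 2i
      have hij' : j = 2*i := by omega
      have hi1 : 1 ≤ i := by omega
      have hi2 : i ≤ 2^k := by rw [pow_succ] at hj2; omega
      obtain ⟨r, hr, h1, h2⟩ := e_children N f k i hk' hi1
      have hp := ih (by omega) i hi1 hi2
      rw [hij', h2]
      rw [abs_le] at *
      rw [pow_succ]
      constructor <;> nlinarith [pow_pos (by norm_num : (0:ℝ) < 1/2) (k+1)]
    · -- j = 2i+1 = 2(i+1)-1
      have hij' : j = 2*(i+1)-1 := by omega
      have hi1 : 1 ≤ i+1 := by omega
      have hi2 : i+1 ≤ 2^k := by rw [pow_succ] at hj2; omega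
      obtain ⟨r, hr, h1, h2⟩ := e_children N f k (i+1) hk' hi1
      have hp := ih (by omega) (i+1) hi1 hi2
      rw [hij', h1]
      rw [abs_le] at *
      rw [pow_succ]
      constructor <;> nlinarith [pow_pos (by norm_num : (0:ℝ) < 1/2) (k+1)]

lemma haar_eval (N k j n : ℕ) (hk1 : 1 ≤ k) (hkN : k ≤ N) (hj : 1 ≤ j) (hn : 1 ≤ n) :
    haar k j (tpt N n) = (2:ℝ) ^ (((k:ℝ) - 1) / 2) *
      (if (2*j-1)*2^(N-k) < n ∧ n ≤ 2*j*2^(N-k) then 1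
       else if (2*j-1-1)*2^(N-k) < n ∧ n ≤ (2*j-1)*2^(N-k) then -1 else 0) := by
  obtain ⟨k', rfl⟩ : ∃ k', k = k'+1 := ⟨k-1, by omega⟩
  obtain ⟨m, rfl⟩ : ∃ m, N = (k'+1) + m := ⟨N - (k'+1), by omega⟩
  have hNk : (k'+1) + m - (k'+1) = m := by omega
  rw [haar, if_neg (by omega), hNk]
  congr 1
  set P : ℕ := 2^m with hP
  have hPpos : (0:ℝ) < (P:ℝ) := by rw [hP]; positivity
  set Q : ℕ := (2*j-1)*P with hQ
  set R : ℕ := 2*j*P with hR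
  set L : ℕ := (2*j-1-1)*P with hL
  have hRQ : R = Q + P := by
    rw [hR, hQ, ← Nat.succ_mul, show Nat.succ (2*j-1) = 2*j by omega]
  have hQL : Q = L + P := by
    rw [hQ, hL, ← Nat.succ_mul, show Nat.succ (2*j-1-1) = 2*j-1 by omega]
  have hx : (2:ℝ)^(k'+1-1) * (tpt ((k'+1)+m) n - Ppt (k'+1) j)
      = ((2*(n:ℝ)-1) - 2*(Q:ℝ)) / (4*(P:ℝ)) := by
    have h2 : ((P:ℝ)) = 2^m := by rw [hP]; push_cast; rfl
    have hQc : ((Q:ℝ)) = (2*(j:ℝ)-1) * (P:ℝ) := by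
      rw [hQ]; push_cast [Nat.cast_sub (show 1 ≤ 2*j by omega)]; ring
    rw [show k'+1-1 = k' by omega]
    unfold tpt Ppt
    rw [hQc, h2]
    rw [show (k'+1)+m+1 = k' + (m+2) by omega, pow_add]
    rw [pow_add]
    field_simp
    ring
  rw [hx]
  have key1 : (0 < ((2*(n:ℝ)-1) - 2*(Q:ℝ)) / (4*(P:ℝ)) ∧
      ((2*(n:ℝ)-1) - 2*(Q:ℝ)) / (4*(P:ℝ)) < 1/2) ↔ (Q < n ∧ n ≤ R) := by
    rw [div_pos_iff_of_pos_right (by linarith), div_lt_iff₀ (by linarith)]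
    constructor
    · rintro ⟨h1, h2⟩
      constructor
      · have : (Q:ℝ) < (n:ℝ) := by linarith
        exact_mod_cast this
      · have : (n:ℝ) < (R:ℝ) + 1 := by
          have hRc : (R:ℝ) = (Q:ℝ) + (P:ℝ) := by exact_mod_cast congrArg (Nat.cast (R := ℝ)) hRQ
          linarith
        have : (n:ℝ) ≤ (R:ℝ) := by
          have := this
          exact_mod_cast Nat.lt_add_one_iff.mp (by exact_mod_cast this)
        exact_mod_cast this
    · rintro ⟨h1, h2⟩
      have h1' : (Q:ℝ) + 1 ≤ (n:ℝ) := by exact_mod_cast h1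
      have h2' : (n:ℝ) ≤ (R:ℝ) := by exact_mod_cast h2
      have hRc : (R:ℝ) = (Q:ℝ) + (P:ℝ) := by exact_mod_cast congrArg (Nat.cast (R := ℝ)) hRQ
      constructor <;> linarith
  have key2 : (-(1/2) < ((2*(n:ℝ)-1) - 2*(Q:ℝ)) / (4*(P:ℝ)) ∧
      ((2*(n:ℝ)-1) - 2*(Q:ℝ)) / (4*(P:ℝ)) < 0) ↔ (L < n ∧ n ≤ Q) := by
    rw [neg_lt, ← neg_div, div_lt_iff₀ (by linarith), div_neg_iff]
    have hQc : (Q:ℝ) = (L:ℝ) + (P:ℝ) := by exact_mod_cast congrArg (Nat.cast (R := ℝ)) hQL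
    constructor
    · rintro ⟨h1, h2⟩
      rcases h2 with ⟨h2a, h2b⟩ | ⟨h2a, h2b⟩
      · linarith
      constructor
      · have : (L:ℝ) < (n:ℝ) := by linarith
        exact_mod_cast this
      · have hlt : (n:ℝ) < (Q:ℝ) + 1 := by linarith
        exact_mod_cast Nat.lt_add_one_iff.mp (by exact_mod_cast hlt)
    · rintro ⟨h1, h2⟩
      have h1' : (L:ℝ) + 1 ≤ (n:ℝ) := by exact_mod_cast h1
      have h2' : (n:ℝ) ≤ (Q:ℝ) := by exact_mod_cast h2
      refine ⟨by linarith, Or.inr ⟨by linarith, by linarith⟩⟩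
  unfold haar11
  rw [if_congr key1 rfl rfl, if_congr key2 rfl rfl]


lemma Htrans_sub (N : ℕ) (f g : ℕ → ℝ) (k j : ℕ) :
    Htrans N f k j - Htrans N g k j
      = (1/2^N) * ∑ n ∈ Finset.Icc 1 (2^N), haar k j (tpt N n) * (f n - g n) := by
  unfold Htrans innerOmega
  rw [← mul_sub, ← Finset.sum_sub_distrib]
  congr 1
  apply Finset.sum_congr rfl
  intro n _
  ring

lemma sum_err (N : ℕ) (f : ℕ → ℝ) (k j : ℕ) (hk : k ≤ N) (hj : 1 ≤ j) :
    ∑ n ∈ Finset.Ioc ((j-1)*2^(N-k)) (j*2^(N-k)), (f n - (Tq N f N n : ℝ))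
      = Sq N f k j - (Tq N f k j : ℝ) := by
  rw [Finset.sum_sub_distrib]
  have h := Tq_sum N f (N-k) k j (by omega) hj
  have h2 : ∑ n ∈ Finset.Ioc ((j-1)*2^(N-k)) (j*2^(N-k)), ((Tq N f N n : ℝ))
      = ((Tq N f k j : ℝ)) := by
    rw [← h]; push_cast; rfl
  rw [h2]
  rfl

lemma rpow_neg_eq (N : ℕ) : (2:ℝ) ^ (-(N:ℝ) - 1) = ((2:ℝ)^(N+1))⁻¹ := by
  rw [show -(N:ℝ)-1 = -(((N+1:ℕ)):ℝ) by push_cast; ring,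
    Real.rpow_neg (by norm_num), Real.rpow_natCast]

/-- **Theorem 1 (main quantization theorem).** For every real-valued signal `f : Ω → ℝ`
there is an integer-valued signal `g : Ω → ℤ` with
`|Hf[0,1] − Hg[0,1]| ≤ 2^{−N−1}`,
`|Hf[k,j] − Hg[k,j]| ≤ 2^{−N+(k−1)/2}` for all `(k,j) ∈ Ω̂` with `k ≥ 1`, and
`sup_{t∈Ω} |f(t) − g(t)| ≤ 1 − 2^{−N−1} < 1`. -/
theorem main_quantization (N : ℕ) (f : ℕ → ℝ) :
    ∃ g : ℕ → ℤ,
      |Htrans N f 0 1 - Htrans N (fun n => (g n : ℝ)) 0 1| ≤ (2:ℝ) ^ (-(N:ℝ) - 1) ∧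
      (∀ k j : ℕ, 1 ≤ k → k ≤ N → 1 ≤ j → j ≤ 2^(k-1) →
        |Htrans N f k j - Htrans N (fun n => (g n : ℝ)) k j| ≤
          (2:ℝ) ^ (-(N:ℝ) + ((k:ℝ) - 1) / 2)) ∧
      (∀ n ∈ Finset.Icc 1 (2^N), |f n - (g n : ℝ)| ≤ 1 - (2:ℝ) ^ (-(N:ℝ) - 1)) ∧
      1 - (2:ℝ) ^ (-(N:ℝ) - 1) < 1 := by
  refine ⟨fun n => Tq N f N n, ?_, ?_, ?_, ?_⟩
  · -- mean condition
    rw [Htrans_sub]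
    have hpt : ∀ n, haar 0 1 (tpt N n) = 1 := by intro n; rw [haar, if_pos rfl]
    have hIcc : Finset.Icc 1 (2^N) = Finset.Ioc ((1-1)*2^(N-0)) (1*2^(N-0)) := by
      norm_num [← Finset.Icc_add_one_left_eq_Ioc]
    have hs : ∑ n ∈ Finset.Icc 1 (2^N), haar 0 1 (tpt N n) * (f n - (Tq N f N n : ℝ))
        = Sq N f 0 1 - (Tq N f 0 1 : ℝ) := by
      rw [hIcc, ← sum_err N f 0 1 (by omega) (by omega)]
      apply Finset.sum_congr rfl
      intro n _
      rw [hpt]; ring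
    rw [hs, rpow_neg_eq]
    have hb : |Sq N f 0 1 - (Tq N f 0 1 : ℝ)| ≤ 1/2 := by
      have : Tq N f 0 1 = round (Sq N f 0 1) := by rw [Tq]
      rw [this]; exact abs_sub_round _
    rw [abs_mul, abs_of_pos (show (0:ℝ) < 1/2^N by positivity)]
    calc 1/2^N * |Sq N f 0 1 - (Tq N f 0 1 : ℝ)| ≤ 1/2^N * (1/2) :=
          mul_le_mul_of_nonneg_left hb (by positivity)
    _ = ((2:ℝ)^(N+1))⁻¹ := by rw [pow_succ, mul_inv]; ring
  · -- Haar coefficients, k ≥ 1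
    intro k j hk1 hkN hj1 hj2
    rw [Htrans_sub]
    set A : ℝ := (2:ℝ) ^ (((k:ℝ) - 1) / 2) with hA
    have hApos : 0 < A := Real.rpow_pos_of_pos (by norm_num) _
    set QQ : ℕ := (2*j-1)*2^(N-k) with hQQ
    set RR : ℕ := 2*j*2^(N-k) with hRR
    set LL : ℕ := (2*j-1-1)*2^(N-k) with hLL
    have hRle : RR ≤ 2^N := by
      rw [hRR]
      calc 2*j*2^(N-k) ≤ 2*2^(k-1)*2^(N-k) :=
            Nat.mul_le_mul_right _ (Nat.mul_le_mul_left _ hj2)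
      _ = 2^N := by
          rw [show 2*2^(k-1) = 2^k by rw [← pow_succ']; congr 1; omega, ← pow_add]
          congr 1; omega
    have hsub1 : Finset.Ioc QQ RR ⊆ Finset.Icc 1 (2^N) := by
      intro n hn
      simp only [Finset.mem_Ioc] at hn
      simp only [Finset.mem_Icc]
      omega
    have hsub2 : Finset.Ioc LL QQ ⊆ Finset.Icc 1 (2^N) := by
      intro n hn
      have hQR : QQ ≤ RR := by
        rw [hQQ, hRR]; exact Nat.mul_le_mul_right _ (by omega)
      simp only [Finset.mem_Ioc] at hn
      simp only [Finset.mem_Icc]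
      omega
    have hptw : ∀ n ∈ Finset.Icc 1 (2^N),
        haar k j (tpt N n) * (f n - (Tq N f N n : ℝ))
          = A * ((if n ∈ Finset.Ioc QQ RR then (f n - (Tq N f N n : ℝ)) else 0)
               - (if n ∈ Finset.Ioc LL QQ then (f n - (Tq N f N n : ℝ)) else 0)) := by
      intro n hn
      simp only [Finset.mem_Icc] at hn
      rw [haar_eval N k j n hk1 hkN hj1 hn.1, ← hA, ← hQQ, ← hRR, ← hLL]
      by_cases h1 : QQ < n ∧ n ≤ RR
      · rw [if_pos h1, if_pos (Finset.mem_Ioc.mpr h1), if_neg]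
        · ring
        · rw [Finset.mem_Ioc]; omega
      · rw [if_neg h1, if_neg (fun hc => h1 (Finset.mem_Ioc.mp hc))]
        by_cases h2 : LL < n ∧ n ≤ QQ
        · rw [if_pos h2, if_pos (Finset.mem_Ioc.mpr h2)]; ring
        · rw [if_neg h2, if_neg (fun hc => h2 (Finset.mem_Ioc.mp hc))]; ring
    rw [Finset.sum_congr rfl hptw, ← Finset.mul_sum]
    rw [Finset.sum_sub_distrib, Finset.sum_ite_mem, Finset.sum_ite_mem,
      Finset.inter_eq_right.mpr hsub1, Finset.inter_eq_right.mpr hsub2]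
    have heR : ∑ n ∈ Finset.Ioc QQ RR, (f n - (Tq N f N n : ℝ))
        = Sq N f k (2*j) - (Tq N f k (2*j) : ℝ) := by
      rw [← sum_err N f k (2*j) hkN (by omega)]
    have heL : ∑ n ∈ Finset.Ioc LL QQ, (f n - (Tq N f N n : ℝ))
        = Sq N f k (2*j-1) - (Tq N f k (2*j-1) : ℝ) := by
      rw [← sum_err N f k (2*j-1) hkN (by omega)]
    have hrw : (2:ℝ) ^ (-(N:ℝ) + ((k:ℝ) - 1) / 2) = (1/2^N) * A := by
      rw [Real.rpow_add (by norm_num)]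
      congr 1
      rw [show -(N:ℝ) = -((N:ℕ):ℝ) by push_cast; ring, Real.rpow_neg (by norm_num),
        Real.rpow_natCast, one_div]
    obtain ⟨k'', rfl⟩ : ∃ k'', k = k''+1 := ⟨k-1, by omega⟩
    obtain ⟨r, hr, hodd, heven⟩ := e_children N f k'' j (by omega) hj1
    rw [heR, heL, heven, hodd]
    have hval : (Sq N f k'' j - ↑(Tq N f k'' j)) / 2 - r
        - (r + (Sq N f k'' j - ↑(Tq N f k'' j)) / 2) = -(2*r) := by ring
    rw [hval]
    rw [abs_mul, abs_mul, abs_neg, abs_of_pos (show (0:ℝ) < 1/2^N by positivity),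
      abs_of_pos hApos]
    have habs : |2*r| ≤ 1 := by
      rw [abs_le] at hr ⊢; constructor <;> linarith
    rw [hrw]
    calc 1/2^N * (A * |2*r|) ≤ 1/2^N * (A * 1) := by
          apply mul_le_mul_of_nonneg_left _ (by positivity)
          exact mul_le_mul_of_nonneg_left habs (le_of_lt hApos)
    _ = 1/2^N * A := by ring
  · -- uniform bound
    intro n hn
    simp only [Finset.mem_Icc] at hn
    have h := e_bound N f N (le_refl N) n hn.1 hn.2
    rw [Sq_leaf N f n hn.1] at h
    rw [rpow_neg_eq]
    calc |f n - (Tq N f N n : ℝ)| ≤ 1 - (1/2:ℝ)^(N+1) := h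
    _ = 1 - ((2:ℝ)^(N+1))⁻¹ := by rw [one_div, inv_pow]
  · -- strict inequality
    have : (0:ℝ) < (2:ℝ) ^ (-(N:ℝ) - 1) := Real.rpow_pos_of_pos (by norm_num) _
    linarith
end
end

section
/- For every (k,j) ∈ Ω̂ with k ≥ 1 and every ξ ∈ Ξ with ξ ≠ 0, the discrete Fourier transform of the Haar function satisfies F(Haar[k,j])[ξ] = (2^{(k−1)/2}/2^N) · e^{−2πi P[k,j] ξ} · (1 − cos(2π·2^{−k}ξ)) / (i sin(2^{−N}πξ)); in particular |F(Haar[k,j])[ξ]| = (2^{(k−1)/2}/2^N) · (1 − cos(2π·2^{−k}ξ)) / |sin(2^{−N}πξ)|. -/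
open Finset Real

noncomputable section

lemma sum_pm (s P Q : Finset ℕ) (E : ℕ → ℂ) (hP : P ⊆ s) (hQ : Q ⊆ s)
    (hd : ∀ n, n ∈ P → n ∉ Q) :
    ∑ n ∈ s, E n * (if n ∈ P then 1 else if n ∈ Q then -1 else 0) =
      (∑ n ∈ P, E n) - ∑ n ∈ Q, E n := by
  have h : ∀ n ∈ s, E n * (if n ∈ P then 1 else if n ∈ Q then (-1:ℂ) else 0)
      = (if n ∈ P then E n else 0) - (if n ∈ Q then E n else 0) := by
    intro n _
    by_cases h1 : n ∈ P
    · simp [h1, hd n h1]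
    · by_cases h2 : n ∈ Q <;> simp [h1, h2]
  rw [Finset.sum_congr rfl h, Finset.sum_sub_distrib]
  congr 1 <;> rw [Finset.sum_ite_mem, Finset.inter_eq_right.mpr ‹_›]

lemma geom_block (w : ℂ) (hw : w ≠ 1) (A B : ℕ) :
    ∑ n ∈ Icc (A+1) (A+B), w^n = w^(A+1) * (w^B - 1)/(w - 1) := by
  rw [← Finset.Ico_add_one_right_eq_Icc, Finset.sum_Ico_eq_sum_range]
  have hB : A + B + 1 - (A + 1) = B := by omega
  rw [hB]
  have : ∀ i, w^(A+1+i) = w^(A+1) * w^i := fun i => pow_add w (A+1) i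
  rw [Finset.sum_congr rfl fun i _ => this i, ← Finset.mul_sum, geom_sum_eq hw, mul_div_assoc]
lemma h11val (a b i n : ℕ) :
    haar11 ((2:ℝ)^a * (tpt (a+1+b) n - Ppt (a+1) (i+1))) =
      (if n ∈ Icc (2*i*2^b + 2^b + 1) (2*i*2^b + 2*2^b) then 1
       else if n ∈ Icc (2*i*2^b + 1) (2*i*2^b + 2^b) then -1 else 0) := by
  have hm : (1:ℕ) ≤ 2^b := Nat.one_le_two_pow
  have hmR : (0:ℝ) < ((2^b:ℕ):ℝ) := by positivity
  have harg : (2:ℝ)^a * (tpt (a+1+b) n - Ppt (a+1) (i+1)) =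
      (2*(n:ℝ) - 1 - 2*((2*i*2^b:ℕ):ℝ) - 2*((2^b:ℕ):ℝ)) / (4*((2^b:ℕ):ℝ)) := by
    simp only [tpt, Ppt]
    push_cast
    field_simp
    ring
  rw [harg]
  set A := 2*i*2^b with hA
  set m := 2^b with hmdef
  have hmR1 : (1:ℝ) ≤ (m:ℝ) := by exact_mod_cast hm
  by_cases h1 : n ≤ A
  · have hn : (n:ℝ) ≤ (A:ℝ) := by exact_mod_cast h1
    have hc1 : ¬ (0 < (2*(n:ℝ) - 1 - 2*A - 2*m) / (4*(m:ℝ)) ∧ (2*(n:ℝ) - 1 - 2*A - 2*m) / (4*(m:ℝ)) < (1:ℝ)/2) := by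
      rintro ⟨h, -⟩
      rw [lt_div_iff₀ (by positivity)] at h
      linarith
    have hc2 : ¬ (-(1/2) < (2*(n:ℝ) - 1 - 2*A - 2*m) / (4*(m:ℝ)) ∧ (2*(n:ℝ) - 1 - 2*A - 2*m) / (4*(m:ℝ)) < (0:ℝ)) := by
      rintro ⟨h, -⟩
      rw [lt_div_iff₀ (by positivity)] at h
      linarith
    rw [haar11, if_neg hc1, if_neg hc2, if_neg, if_neg] <;> · simp only [mem_Icc]; omega
  · push_neg at h1
    by_cases h2 : n ≤ A + m
    · have hn1 : (A:ℝ) + 1 ≤ (n:ℝ) := by exact_mod_cast h1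
      have hn2 : (n:ℝ) ≤ (A:ℝ) + m := by exact_mod_cast h2
      have hc1 : ¬ (0 < (2*(n:ℝ) - 1 - 2*A - 2*m) / (4*(m:ℝ)) ∧ (2*(n:ℝ) - 1 - 2*A - 2*m) / (4*(m:ℝ)) < (1:ℝ)/2) := by
        rintro ⟨h, -⟩
        rw [lt_div_iff₀ (by positivity)] at h
        linarith
      have hc2 : (-(1/2) < (2*(n:ℝ) - 1 - 2*A - 2*m) / (4*(m:ℝ)) ∧ (2*(n:ℝ) - 1 - 2*A - 2*m) / (4*(m:ℝ)) < (0:ℝ)) := by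
        constructor
        · rw [lt_div_iff₀ (by positivity)]
          linarith
        · rw [div_lt_iff₀ (by positivity)]
          linarith
      rw [haar11, if_neg hc1, if_pos hc2, if_neg, if_pos] <;> · simp only [mem_Icc]; omega
    · push_neg at h2
      by_cases h3 : n ≤ A + 2*m
      · have hn1 : (A:ℝ) + m + 1 ≤ (n:ℝ) := by exact_mod_cast h2
        have hn2 : (n:ℝ) ≤ (A:ℝ) + 2*m := by exact_mod_cast h3
        have hc1 : (0 < (2*(n:ℝ) - 1 - 2*A - 2*m) / (4*(m:ℝ)) ∧ (2*(n:ℝ) - 1 - 2*A - 2*m) / (4*(m:ℝ)) < (1:ℝ)/2) := by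
          constructor
          · rw [lt_div_iff₀ (by positivity)]
            linarith
          · rw [div_lt_iff₀ (by positivity)]
            linarith
        rw [haar11, if_pos hc1, if_pos]
        simp only [mem_Icc]; omega
      · push_neg at h3
        have hn : (A:ℝ) + 2*m + 1 ≤ (n:ℝ) := by exact_mod_cast h3
        have hc1 : ¬ (0 < (2*(n:ℝ) - 1 - 2*A - 2*m) / (4*(m:ℝ)) ∧ (2*(n:ℝ) - 1 - 2*A - 2*m) / (4*(m:ℝ)) < (1:ℝ)/2) := by
          rintro ⟨-, h⟩
          rw [div_lt_iff₀ (by positivity)] at h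
          linarith
        have hc2 : ¬ (-(1/2) < (2*(n:ℝ) - 1 - 2*A - 2*m) / (4*(m:ℝ)) ∧ (2*(n:ℝ) - 1 - 2*A - 2*m) / (4*(m:ℝ)) < (0:ℝ)) := by
          rintro ⟨-, h⟩
          rw [div_lt_iff₀ (by positivity)] at h
          linarith
        rw [haar11, if_neg hc1, if_neg hc2, if_neg, if_neg] <;> · simp only [mem_Icc]; omega

lemma key (a b i : ℕ) (ξ : ℤ) (hi : i + 1 ≤ 2^a)
    (hsin : Real.sin ((2:ℝ)^(-(((a+1+b:ℕ)):ℝ)) * (π*ξ)) ≠ 0) :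
    ∑ n ∈ Icc 1 (2^(a+1+b)), Complex.exp (-(2*(π:ℂ)*Complex.I) * ((tpt (a+1+b) n : ℝ):ℂ) * (ξ:ℂ)) *
        ((haar11 ((2:ℝ)^a * (tpt (a+1+b) n - Ppt (a+1) (i+1))) : ℝ) : ℂ)
      = Complex.exp (-(2*(π:ℂ)*Complex.I) * ((Ppt (a+1) (i+1) : ℝ):ℂ) * (ξ:ℂ)) *
        ((1 - Real.cos (2*π*((2:ℝ)^(-((a+1:ℕ):ℝ)) * ξ)) : ℝ):ℂ) /
        (Complex.I * ((Real.sin ((2:ℝ)^(-(((a+1+b:ℕ)):ℝ)) * (π*ξ)) : ℝ):ℂ)) := by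
  set φ := (2:ℝ)^(-(((a+1+b:ℕ)):ℝ)) * (π*ξ) with hφdef
  set θ := 2*π*((2:ℝ)^(-((a+1:ℕ):ℝ)) * ξ) with hθdef
  have hrN : (2:ℝ)^(-(((a+1+b:ℕ)):ℝ)) = ((2:ℝ)^(a+1+b))⁻¹ := by
    rw [show (((a+1+b:ℕ)):ℝ) = ((a+1+b:ℕ):ℝ) from rfl, Real.rpow_neg (by norm_num),
      Real.rpow_natCast]
  have hrk : (2:ℝ)^(-((a+1:ℕ):ℝ)) = ((2:ℝ)^(a+1))⁻¹ := by
    rw [Real.rpow_neg (by norm_num), Real.rpow_natCast]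
  have hφ' : φ = π*ξ/2^(a+1+b) := by rw [hφdef, hrN]; ring
  have hθ' : θ = 2*π*ξ/2^(a+1) := by rw [hθdef, hrk]; ring
  set z := -(2*(π:ℂ)*Complex.I) * (ξ:ℂ) with hzdef
  set p := Complex.exp ((θ:ℝ) * Complex.I) with hpdef
  set q := Complex.exp ((φ:ℝ) * Complex.I) with hqdef
  have hq0 : q ≠ 0 := Complex.exp_ne_zero _
  have hp0 : p ≠ 0 := Complex.exp_ne_zero _
  have hpinv : p⁻¹ = Complex.exp (-((θ:ℂ) * Complex.I)) := by
    rw [← Complex.exp_neg]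
  have hqinv : q⁻¹ = Complex.exp (-((φ:ℂ) * Complex.I)) := by
    rw [← Complex.exp_neg]
  have hcos : ((Real.cos θ : ℝ):ℂ) = (p + p⁻¹)/2 := by
    rw [Complex.ofReal_cos, hpinv, hpdef, show -((θ:ℂ)*Complex.I) = (-(θ:ℂ))*Complex.I by ring,
      Complex.exp_mul_I, Complex.exp_mul_I, Complex.cos_neg, Complex.sin_neg]
    ring
  have hsinq : ((Real.sin φ : ℝ):ℂ) = (q⁻¹ - q) * Complex.I / 2 := by
    rw [Complex.ofReal_sin, hqinv, hqdef, show -((φ:ℂ)*Complex.I) = (-(φ:ℂ))*Complex.I by ring,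
      Complex.exp_mul_I, Complex.exp_mul_I, Complex.cos_neg, Complex.sin_neg]
    linear_combination (Complex.sin (φ:ℂ)) * Complex.I_sq
  have hqdiff : q⁻¹ - q = -2*((Real.sin φ : ℝ):ℂ)*Complex.I := by
    rw [hsinq]
    linear_combination (q⁻¹ - q) * Complex.I_sq
  have hsφ0 : ((Real.sin φ : ℝ):ℂ) ≠ 0 := Complex.ofReal_ne_zero.mpr hsin
  set w := Complex.exp (z * ((((2:ℝ)^(a+1+b))⁻¹ : ℝ):ℂ)) with hwdef
  set E0 := Complex.exp (z * ((-(1/2) - ((2:ℝ)^(a+1+b+1))⁻¹ : ℝ):ℂ)) with hE0def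
  have hwq : w = q⁻¹ * q⁻¹ := by
    rw [hqinv, ← Complex.exp_add, hwdef]
    congr 1
    rw [hzdef, hφ']
    push_cast
    have h2 : ((2:ℂ)^(a+1+b)) ≠ 0 := pow_ne_zero _ two_ne_zero
    field_simp
    ring
  have hwm : w^(2^b) = p⁻¹ := by
    rw [hpinv, hwdef, ← Complex.exp_nat_mul]
    congr 1
    rw [hzdef, hθ']
    push_cast
    have h2 : ((2:ℂ)^(a+1+b)) ≠ 0 := pow_ne_zero _ two_ne_zero
    have h3 : ((2:ℂ)^(a+1)) ≠ 0 := pow_ne_zero _ two_ne_zero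
    field_simp
    ring
  have hw1 : w ≠ 1 := by
    intro h
    rw [hwq, ← mul_inv, inv_eq_one] at h
    apply hsin
    have h0 : ((Real.sin φ:ℝ):ℂ) = 0 := by
      rw [hsinq, inv_eq_of_mul_eq_one_left h]
      ring
    exact_mod_cast h0
  have hw1' : w - 1 ≠ 0 := sub_ne_zero.mpr hw1
  -- rewrite the haar11 values
  have hsum1 : ∀ n, ((haar11 ((2:ℝ)^a * (tpt (a+1+b) n - Ppt (a+1) (i+1))) : ℝ) : ℂ)
      = (if n ∈ Icc (2*i*2^b + 2^b + 1) (2*i*2^b + 2*2^b) then 1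
         else if n ∈ Icc (2*i*2^b + 1) (2*i*2^b + 2^b) then -1 else 0) := by
    intro n
    rw [h11val]
    simp [apply_ite (fun x : ℝ => (x:ℂ))]
  simp only [hsum1]
  have hpow : 2^(a+1+b) = 2*2^a*2^b := by rw [pow_add, pow_succ]; ring
  have hml : 1 ≤ 2^b := Nat.one_le_two_pow
  have hub : 2*i*2^b + 2*2^b ≤ 2^(a+1+b) := by
    rw [hpow]
    have := Nat.mul_le_mul_right (2^b) (show 2*i+2 ≤ 2*2^a by omega)
    nlinarith
  rw [sum_pm _ _ _ _ ?hP ?hQ ?hd]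
  case hP => intro x hx; simp only [mem_Icc] at *; omega
  case hQ => intro x hx; simp only [mem_Icc] at *; omega
  case hd => intro x hx hx'; simp only [mem_Icc] at *; omega
  have hE : ∀ n : ℕ, Complex.exp (-(2*(π:ℂ)*Complex.I) * ((tpt (a+1+b) n : ℝ):ℂ) * (ξ:ℂ))
      = E0 * w^n := by
    intro n
    rw [hwdef, hE0def, ← Complex.exp_nat_mul, ← Complex.exp_add]
    congr 1
    rw [hzdef]
    simp only [tpt]
    push_cast
    have h2 : ((2:ℂ)^(a+1+b+1)) ≠ 0 := pow_ne_zero _ two_ne_zero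
    have h3 : ((2:ℂ)^(a+1+b)) ≠ 0 := pow_ne_zero _ two_ne_zero
    field_simp
    ring
  simp only [hE]
  rw [show Icc (2*i*2^b + 2^b + 1) (2*i*2^b + 2*2^b)
        = Icc ((2*i*2^b + 2^b) + 1) ((2*i*2^b + 2^b) + 2^b) by congr 1 <;> omega]
  rw [← Finset.mul_sum, ← Finset.mul_sum, geom_block w hw1 (2*i*2^b + 2^b) (2^b),
    geom_block w hw1 (2*i*2^b) (2^b)]
  have hEP : E0 * w^(2*i*2^b+1)
      = Complex.exp (z * ((Ppt (a+1) (i+1):ℝ):ℂ)) * (q⁻¹ * p) := by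
    rw [hE0def, hwdef, ← Complex.exp_nat_mul, ← Complex.exp_add, hqinv, hpdef,
      ← Complex.exp_add, ← Complex.exp_add]
    congr 1
    rw [hzdef, hθ', hφ']
    simp only [Ppt]
    push_cast
    have h2 : ((2:ℂ)^(a+1+b+1)) ≠ 0 := pow_ne_zero _ two_ne_zero
    have h3 : ((2:ℂ)^(a+1+b)) ≠ 0 := pow_ne_zero _ two_ne_zero
    have h4 : ((2:ℂ)^(a+1)) ≠ 0 := pow_ne_zero _ two_ne_zero
    field_simp
    ring
  have hstep : E0 * (w^((2*i*2^b + 2^b)+1) * (w^(2^b) - 1)/(w - 1))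
      - E0 * (w^(2*i*2^b+1) * (w^(2^b) - 1)/(w - 1))
      = (E0 * w^(2*i*2^b+1)) * (w^(2^b) - 1)^2/(w - 1) := by
    rw [show (2*i*2^b + 2^b)+1 = (2*i*2^b+1) + 2^b by omega, pow_add]
    field_simp
  rw [hstep, hEP, hwm, hwq]
  have hzP : Complex.exp (z * ((Ppt (a+1) (i+1):ℝ):ℂ))
      = Complex.exp (-(2*(π:ℂ)*Complex.I) * ((Ppt (a+1) (i+1) : ℝ):ℂ) * (ξ:ℂ)) := by
    congr 1
    rw [hzdef]
    ring
  rw [hzP, Complex.ofReal_sub, Complex.ofReal_one, hcos]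
  rw [show q⁻¹*q⁻¹ - 1 = q⁻¹*(q⁻¹ - q) by field_simp, hqdiff]
  have hden1 : q⁻¹ * (-2*((Real.sin φ:ℝ):ℂ)*Complex.I) ≠ 0 :=
    mul_ne_zero (inv_ne_zero hq0)
      (mul_ne_zero (mul_ne_zero (by norm_num) hsφ0) Complex.I_ne_zero)
  have hden2 : Complex.I * ((Real.sin φ:ℝ):ℂ) ≠ 0 := mul_ne_zero Complex.I_ne_zero hsφ0
  rw [div_eq_div_iff hden1 hden2]
  field_simp
  ring

/-- **Fourier coefficients of the Haar functions.** For `(k,j) ∈ Ω̂` with `k ≥ 1` and nonzero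
`ξ ∈ Ξ`,
`F(Haar[k,j])[ξ] = (2^{(k−1)/2}/2^N) e^{−2πi P[k,j] ξ} (1 − cos(2π 2^{−k} ξ))/(i sin(2^{−N}πξ))`,
and in particular
`|F(Haar[k,j])[ξ]| = (2^{(k−1)/2}/2^N) (1 − cos(2π 2^{−k} ξ))/|sin(2^{−N}πξ)|`. -/
theorem fourier_of_haar (N : ℕ) (k j : ℕ) (hk1 : 1 ≤ k) (hkN : k ≤ N)
    (hj1 : 1 ≤ j) (hj2 : j ≤ 2^(k-1))
    (ξ : ℤ) (hξ0 : ξ ≠ 0) (hξ1 : -(2^(N-1) : ℤ) < ξ) (hξ2 : ξ ≤ 2^(N-1)) :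
    Ftrans N (fun n => haar k j (tpt N n)) ξ =
      (((2:ℝ) ^ (((k:ℝ) - 1) / 2) / 2^N : ℝ) : ℂ) *
        Complex.exp (-(2 * (Real.pi : ℂ) * Complex.I) * (Ppt k j : ℂ) * (ξ : ℂ)) *
        ((1 - Real.cos (2 * Real.pi * ((2:ℝ) ^ (-(k:ℝ)) * ξ)) : ℝ) : ℂ) /
        (Complex.I * ((Real.sin ((2:ℝ) ^ (-(N:ℝ)) * (Real.pi * ξ)) : ℝ) : ℂ)) ∧
    ‖Ftrans N (fun n => haar k j (tpt N n)) ξ‖ =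
      ((2:ℝ) ^ (((k:ℝ) - 1) / 2) / 2^N) *
        ((1 - Real.cos (2 * Real.pi * ((2:ℝ) ^ (-(k:ℝ)) * ξ))) /
          |Real.sin ((2:ℝ) ^ (-(N:ℝ)) * (Real.pi * ξ))|) := by
  have hN1 : 1 ≤ N := le_trans hk1 hkN
  have hsin : Real.sin ((2:ℝ)^(-(N:ℝ)) * (π*ξ)) ≠ 0 := by
    obtain ⟨c, rfl⟩ : ∃ c, N = c + 1 := ⟨N-1, by omega⟩
    rw [show (c+1) - 1 = c by omega] at hξ1 hξ2
    have hB : (0:ℝ) < (2:ℝ)^c := by positivity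
    have hξB1 : -((2:ℝ)^c) < (ξ:ℝ) := by
      have : ((-(2^c:ℤ) : ℤ) : ℝ) < (ξ:ℝ) := by exact_mod_cast hξ1
      push_cast at this
      linarith
    have hξB2 : (ξ:ℝ) ≤ (2:ℝ)^c := by exact_mod_cast hξ2
    have hφeq : (2:ℝ)^(-((c+1:ℕ):ℝ)) * (π*ξ) = π*ξ/(2*(2:ℝ)^c) := by
      rw [Real.rpow_neg (by norm_num), Real.rpow_natCast, pow_succ]
      ring
    rw [hφeq]
    rcases lt_or_gt_of_ne hξ0 with hneg | hpos
    · have hξR : (ξ:ℝ) < 0 := by exact_mod_cast hneg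
      have h1 : π*ξ/(2*(2:ℝ)^c) < 0 := by
        apply div_neg_of_neg_of_pos
        · exact mul_neg_of_pos_of_neg Real.pi_pos hξR
        · positivity
      have h2 : -π < π*ξ/(2*(2:ℝ)^c) := by
        rw [lt_div_iff₀ (by positivity)]
        nlinarith [Real.pi_pos]
      exact ne_of_lt (Real.sin_neg_of_neg_of_neg_pi_lt h1 h2)
    · have hξR : (0:ℝ) < (ξ:ℝ) := by exact_mod_cast hpos
      have h1 : 0 < π*ξ/(2*(2:ℝ)^c) := by positivity
      have h2 : π*ξ/(2*(2:ℝ)^c) < π := by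
        rw [div_lt_iff₀ (by positivity)]
        nlinarith [Real.pi_pos]
      exact ne_of_gt (Real.sin_pos_of_pos_of_lt_pi h1 h2)
  have h1 : Ftrans N (fun n => haar k j (tpt N n)) ξ =
      (((2:ℝ) ^ (((k:ℝ) - 1) / 2) / 2^N : ℝ) : ℂ) *
        Complex.exp (-(2 * (Real.pi : ℂ) * Complex.I) * (Ppt k j : ℂ) * (ξ : ℂ)) *
        ((1 - Real.cos (2 * Real.pi * ((2:ℝ) ^ (-(k:ℝ)) * ξ)) : ℝ) : ℂ) /
        (Complex.I * ((Real.sin ((2:ℝ) ^ (-(N:ℝ)) * (Real.pi * ξ)) : ℝ) : ℂ)) := by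
    obtain ⟨a, rfl⟩ : ∃ a, k = a + 1 := ⟨k-1, by omega⟩
    obtain ⟨b, rfl⟩ : ∃ b, N = (a+1) + b := ⟨N-(a+1), by omega⟩
    obtain ⟨i, rfl⟩ : ∃ i, j = i+1 := ⟨j-1, by omega⟩
    have hi : i + 1 ≤ 2^a := by simpa using hj2
    have hhaar : ∀ t, haar (a+1) (i+1) t =
        (2:ℝ)^((((a+1:ℕ):ℝ) - 1)/2) * haar11 ((2:ℝ)^a * (t - Ppt (a+1) (i+1))) := by
      intro t
      simp [haar]
    have hsummand : ∀ n : ℕ,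
        Complex.exp (-(2*(π:ℂ)*Complex.I) * ((tpt (a+1+b) n : ℝ):ℂ) * (ξ:ℂ)) *
          ((haar (a+1) (i+1) (tpt (a+1+b) n) : ℝ):ℂ)
        = (((2:ℝ)^((((a+1:ℕ):ℝ) - 1)/2) : ℝ) : ℂ) *
          (Complex.exp (-(2*(π:ℂ)*Complex.I) * ((tpt (a+1+b) n : ℝ):ℂ) * (ξ:ℂ)) *
            ((haar11 ((2:ℝ)^a * (tpt (a+1+b) n - Ppt (a+1) (i+1))) : ℝ):ℂ)) := by
      intro n
      rw [hhaar]
      push_cast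
      ring
    simp only [Ftrans]
    simp only [hsummand]
    rw [← Finset.mul_sum, key a b i ξ hi hsin]
    push_cast
    ring
  refine ⟨h1, ?_⟩
  rw [h1]
  rw [norm_div, norm_mul, norm_mul, Complex.norm_real, Real.norm_eq_abs, Complex.norm_real, Real.norm_eq_abs, norm_mul,
    Complex.norm_I, Complex.norm_real, Real.norm_eq_abs]
  have habs : ‖Complex.exp (-(2*(π:ℂ)*Complex.I) * ((Ppt k j : ℝ):ℂ) * (ξ:ℂ))‖ = 1 := by
    rw [show -(2*(π:ℂ)*Complex.I) * ((Ppt k j : ℝ):ℂ) * (ξ:ℂ)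
        = ((-(2*π*(Ppt k j)*ξ) : ℝ):ℂ) * Complex.I by push_cast; ring,
      Complex.norm_exp_ofReal_mul_I]
  rw [habs]
  have hc1 : |(2:ℝ)^(((k:ℝ)-1)/2) / 2^N| = (2:ℝ)^(((k:ℝ)-1)/2) / 2^N :=
    abs_of_nonneg (by positivity)
  have hc2 : |1 - Real.cos (2 * Real.pi * ((2:ℝ) ^ (-(k:ℝ)) * ξ))|
      = 1 - Real.cos (2 * Real.pi * ((2:ℝ) ^ (-(k:ℝ)) * ξ)) :=
    abs_of_nonneg (by nlinarith [Real.cos_le_one (2 * Real.pi * ((2:ℝ) ^ (-(k:ℝ)) * ξ))])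
  rw [hc1, hc2]
  ring
end
end

section
/- Let N ∈ ℕ, k ∈ {1,…,N}, ξ ∈ ℤ with ξ ≠ 0 and |ξ| ≤ 2^{N−1}, and set ω_N = 2^{−N}·2π. Then Σ_{n=1}^{2^{N−k}} e^{−i ω_N ξ (n − 1/2)} − Σ_{n=1}^{2^{N−k}} e^{i ω_N ξ (n − 1/2)} = (1 − cos(2π·2^{−k}ξ)) / (i sin(2^{−N}πξ)). -/
open Finset Real

/-- **Difference of geometric sums.** For `1 ≤ k ≤ N`, nonzero `ξ ∈ ℤ` with `|ξ| ≤ 2^{N−1}`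
and `ω_N = 2^{−N}·2π`,
`∑_{n=1}^{2^{N−k}} e^{−i ω_N ξ (n−1/2)} − ∑_{n=1}^{2^{N−k}} e^{i ω_N ξ (n−1/2)}
  = (1 − cos(2π 2^{−k} ξ)) / (i sin(2^{−N} π ξ))`. -/
theorem haar_geometric_sum_difference (N k : ℕ) (hk1 : 1 ≤ k) (hkN : k ≤ N)
    (ξ : ℤ) (hξ0 : ξ ≠ 0) (hξ : |ξ| ≤ 2^(N-1)) :
    (∑ n ∈ (Finset.Icc 1 (2^(N-k)) : Finset ℕ),
        Complex.exp (-Complex.I * (((2:ℝ) ^ (-(N:ℝ)) * (2 * Real.pi)) : ℝ) * (ξ : ℂ) *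
          ((n : ℂ) - 1/2))) -
      (∑ n ∈ (Finset.Icc 1 (2^(N-k)) : Finset ℕ),
        Complex.exp (Complex.I * (((2:ℝ) ^ (-(N:ℝ)) * (2 * Real.pi)) : ℝ) * (ξ : ℂ) *
          ((n : ℂ) - 1/2))) =
      ((1 - Real.cos (2 * Real.pi * ((2:ℝ) ^ (-(k:ℝ)) * ξ)) : ℝ) : ℂ) /
        (Complex.I * ((Real.sin ((2:ℝ) ^ (-(N:ℝ)) * (Real.pi * ξ))) : ℂ)) := by
  have hN1 : 1 ≤ N := hk1.trans hkN
  have hπ := Real.pi_pos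
  set a : ℝ := (2:ℝ)^(-(N:ℝ)) * (Real.pi * ξ) with ha
  have hrp : (0:ℝ) < (2:ℝ)^(-(N:ℝ)) := Real.rpow_pos_of_pos (by norm_num) _
  -- |a| ≤ π/2
  have haabs : |a| ≤ π/2 := by
    have hcast : |(ξ:ℝ)| ≤ (2:ℝ)^(N-1:ℕ) := by
      have : ((|ξ|:ℤ):ℝ) ≤ (((2:ℤ)^(N-1:ℕ) :ℤ):ℝ) := by exact_mod_cast hξ
      push_cast at this
      simpa using this
    have key : (2:ℝ)^(-(N:ℝ)) * (2:ℝ)^(N-1:ℕ) = 1/2 := by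
      rw [← Real.rpow_natCast 2 (N-1), ← Real.rpow_add (by norm_num), Nat.cast_sub hN1]
      rw [show -(N:ℝ) + ((N:ℝ) - ((1:ℕ):ℝ)) = -1 from by push_cast; ring, Real.rpow_neg_one]
      norm_num
    rw [ha, abs_mul, abs_mul, abs_of_pos hrp, abs_of_pos hπ]
    calc (2:ℝ)^(-(N:ℝ)) * (π * |(ξ:ℝ)|) ≤ (2:ℝ)^(-(N:ℝ)) * (π * (2:ℝ)^(N-1:ℕ)) := by
          gcongr
      _ = π * ((2:ℝ)^(-(N:ℝ)) * (2:ℝ)^(N-1:ℕ)) := by ring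
      _ = π/2 := by rw [key]; ring
  have ha0 : a ≠ 0 := by
    rw [ha]
    refine mul_ne_zero hrp.ne' (mul_ne_zero hπ.ne' ?_)
    exact_mod_cast hξ0
  -- sin a ≠ 0
  have hsa : Real.sin a ≠ 0 := by
    rcases ha0.lt_or_gt with h | h
    · have : Real.sin (-a) > 0 := Real.sin_pos_of_pos_of_lt_pi (by linarith) (by
        have := abs_le.1 haabs; linarith [this.1])
      rw [Real.sin_neg] at this; linarith
    · have : Real.sin a > 0 := Real.sin_pos_of_pos_of_lt_pi h (by
        have := abs_le.1 haabs; linarith [this.2])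
      exact this.ne'
  set u : ℂ := Complex.exp (Complex.I * a) with hu
  have hu0 : u ≠ 0 := Complex.exp_ne_zero _
  have hu2 : u^2 = Complex.exp (Complex.I * (2*a)) := by
    rw [hu, pow_two, ← Complex.exp_add]; congr 1; ring
  have hu2ne : u^2 ≠ 1 := by
    rw [hu2]
    intro h
    obtain ⟨n, hn⟩ := Complex.exp_eq_one_iff.1 h
    have hn' : ((2*a:ℝ):ℂ) * Complex.I = (((n:ℝ) * (2*π) : ℝ):ℂ) * Complex.I := by
      push_cast
      linear_combination hn
    have h2 : (2*a:ℝ) = (n:ℝ) * (2*π) := by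
      have := mul_right_cancel₀ Complex.I_ne_zero hn'
      exact_mod_cast this
    have : a = (n:ℝ) * π := by linarith
    exact hsa (this ▸ Real.sin_int_mul_pi n)
  have huinv : u⁻¹ = Complex.exp (-(Complex.I * a)) := by rw [hu, ← Complex.exp_neg]
  have huinv2 : (u⁻¹)^2 = Complex.exp (-(Complex.I * (2*a))) := by
    rw [huinv, pow_two, ← Complex.exp_add]; congr 1; ring
  have huinv2ne : (u⁻¹)^2 ≠ 1 := by
    rw [huinv2, Complex.exp_neg, ← hu2]
    simp only [ne_eq, inv_eq_one]
    exact hu2ne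
  set M : ℕ := 2^(N-k) with hM
  have hca : ((((2:ℝ) ^ (-(N:ℝ)) * (2 * Real.pi)) : ℝ) : ℂ) * (ξ:ℂ) = 2*(a:ℂ) := by
    rw [ha]
    simp only [Complex.ofReal_mul, Complex.ofReal_ofNat, Complex.ofReal_intCast]
    ring
  -- the two geometric sums
  have hplus : (∑ n ∈ (Finset.Icc 1 M : Finset ℕ),
      Complex.exp (Complex.I * (((2:ℝ) ^ (-(N:ℝ)) * (2 * Real.pi)) : ℝ) * (ξ : ℂ) *
        ((n : ℂ) - 1/2))) = u * ((u^2)^M - 1) / (u^2 - 1) := by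
    rw [← Finset.Ico_add_one_right_eq_Icc, Finset.sum_Ico_eq_sum_range]
    have hterm : ∀ i ∈ Finset.range (M + 1 - 1),
        Complex.exp (Complex.I * (((2:ℝ) ^ (-(N:ℝ)) * (2 * Real.pi)) : ℝ) * (ξ : ℂ) *
          (((1+i : ℕ) : ℂ) - 1/2)) = u * (u^2)^i := by
      intro i _
      rw [hu2, ← Complex.exp_nat_mul, hu, ← Complex.exp_add]
      congr 1
      rw [ha]
      push_cast [Complex.ofReal_mul, Complex.ofReal_ofNat]
      ring
    rw [Finset.sum_congr rfl hterm, ← Finset.mul_sum, geom_sum_eq hu2ne, mul_div_assoc]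
    simp
  have hminus : (∑ n ∈ (Finset.Icc 1 M : Finset ℕ),
      Complex.exp (-Complex.I * (((2:ℝ) ^ (-(N:ℝ)) * (2 * Real.pi)) : ℝ) * (ξ : ℂ) *
        ((n : ℂ) - 1/2))) = u⁻¹ * (((u⁻¹)^2)^M - 1) / ((u⁻¹)^2 - 1) := by
    rw [← Finset.Ico_add_one_right_eq_Icc, Finset.sum_Ico_eq_sum_range]
    have hterm : ∀ i ∈ Finset.range (M + 1 - 1),
        Complex.exp (-Complex.I * (((2:ℝ) ^ (-(N:ℝ)) * (2 * Real.pi)) : ℝ) * (ξ : ℂ) *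
          (((1+i : ℕ) : ℂ) - 1/2)) = u⁻¹ * ((u⁻¹)^2)^i := by
      intro i _
      rw [huinv2, ← Complex.exp_nat_mul, huinv, ← Complex.exp_add]
      congr 1
      rw [ha]
      push_cast [Complex.ofReal_mul, Complex.ofReal_ofNat]
      ring
    rw [Finset.sum_congr rfl hterm, ← Finset.mul_sum, geom_sum_eq huinv2ne, mul_div_assoc]
    simp
  rw [hplus, hminus]
  -- abbreviations for the final algebra
  set v : ℂ := (u^2)^M with hvdef
  have hv0 : v ≠ 0 := pow_ne_zero _ (pow_ne_zero _ hu0)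
  have hvinv : ((u⁻¹)^2)^M = v⁻¹ := by
    rw [hvdef, inv_pow, inv_pow]
  -- argument of the cosine
  have hMr : (M:ℝ) = (2:ℝ)^((N:ℝ)-(k:ℝ)) := by
    rw [hM]
    push_cast
    rw [← Real.rpow_natCast 2 (N-k), Nat.cast_sub hkN]
  have harg : 2*Real.pi*((2:ℝ)^(-(k:ℝ)) * ξ) = 2*a*M := by
    rw [hMr, ha, show (2:ℝ)^(-(k:ℝ)) = 2^(-(N:ℝ)) * 2^((N:ℝ)-(k:ℝ)) from by
      rw [← Real.rpow_add (by norm_num)]; congr 1; ring]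
    ring
  have hv : v = Complex.exp (((2*a*M : ℝ):ℂ) * Complex.I) := by
    rw [hvdef, hu2, ← Complex.exp_nat_mul]
    congr 1
    push_cast
    ring
  have hvinv' : v⁻¹ = Complex.exp (-((2*a*M : ℝ):ℂ) * Complex.I) := by
    rw [hv, ← Complex.exp_neg]
    congr 1
    ring
  have hcos : ((Real.cos (2*Real.pi*((2:ℝ)^(-(k:ℝ)) * ξ)) : ℝ):ℂ) = (v + v⁻¹)/2 := by
    rw [harg, Complex.ofReal_cos, Complex.cos, hvinv', hv]
  have hsin : ((Real.sin a : ℝ):ℂ) = (u⁻¹ - u) * Complex.I / 2 := by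
    rw [Complex.ofReal_sin, Complex.sin, huinv, hu]
    congr 3
    · congr 1; ring
    · congr 1; ring
  have hsinne : (u⁻¹ - u) ≠ 0 := by
    intro h
    apply hu2ne
    have h1 : u⁻¹ = u := sub_eq_zero.1 h
    have h2 : u * u = 1 := by
      calc u * u = u * u⁻¹ := by rw [h1]
        _ = 1 := mul_inv_cancel₀ hu0
    rw [pow_two]; exact h2
  have hd1 : u^2 - 1 ≠ 0 := sub_ne_zero.2 hu2ne
  have hd2 : (u⁻¹)^2 - 1 ≠ 0 := sub_ne_zero.2 huinv2ne
  rw [hvinv, Complex.ofReal_sub, Complex.ofReal_one, hcos, hsin]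
  clear_value u v
  have hsinne' : u - u⁻¹ ≠ 0 := by
    intro h; apply hsinne
    have : u⁻¹ - u = -(u - u⁻¹) := by ring
    rw [this, h, neg_zero]
  rw [show Complex.I * ((u⁻¹ - u) * Complex.I / 2) = (u - u⁻¹)/2 from by
    linear_combination ((u⁻¹ - u)/2) * Complex.I_sq]
  have hfrac : u⁻¹ * (v⁻¹ - 1) / (u⁻¹^2 - 1) = u * (1 - v⁻¹) / (u^2 - 1) := by
    rw [div_eq_div_iff hd2 hd1]
    field_simp
    ring
  have goalstep : (1 - (v + v⁻¹)/2) / ((u - u⁻¹)/2)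
      = (u * (1 - v⁻¹) - u * (v - 1)) / (u^2 - 1) := by
    rw [div_eq_div_iff (div_ne_zero hsinne' two_ne_zero) hd1]
    field_simp
    ring
  rw [hfrac, goalstep, div_sub_div_same]
end

section
/- Let f, g : Ω → ℝ satisfy |Hf[0,1] − Hg[0,1]| ≤ 2^{−N−1} and |Hf[k,j] − Hg[k,j]| ≤ 2^{−N+(k−1)/2} for all (k,j) ∈ Ω̂ with k ≥ 1. Then sup_{t∈Ω} |f(t) − g(t)| ≤ 2^{−N−1} + Σ_{k=1}^{N} 2^{−N+k−1} = 1 − 2^{−N−1}. -/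
open Finset Real

noncomputable section

lemma haar_val (N k p n : ℕ) (hk1 : 1 ≤ k) (hkN : k ≤ N) (hn : 1 ≤ n) :
    haar k (p+1) (tpt N n) =
      (2:ℝ) ^ (((k:ℝ) - 1)/2) *
        (if (2*p+1)*2^(N-k) < n ∧ n ≤ (2*p+2)*2^(N-k) then 1
         else if 2*p*2^(N-k) < n ∧ n ≤ (2*p+1)*2^(N-k) then -1 else 0) := by
  have hk0 : k ≠ 0 := by omega
  rw [haar, if_neg hk0]
  congr 1
  have hr : N - k + (k - 1) + 2 = N + 1 := by omega
  set M : ℕ := 2^(N-k) with hM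
  have hMpos : (0:ℝ) < (M:ℝ) := by positivity
  have hpow : (4:ℝ) * M * 2^(k-1) = 2^(N+1) := by
    rw [hM]; push_cast
    rw [show (4:ℝ) * 2^(N-k) * 2^(k-1) = 2^(N-k) * 2^(k-1) * 2^2 by ring,
      ← pow_add, ← pow_add, hr]
  set x : ℝ := (2:ℝ)^(k-1) * (tpt N n - Ppt k (p+1)) with hx
  have h2k : (2:ℝ)^k ≠ 0 := by positivity
  have hk2 : (2:ℝ)^k = 2 * 2^(k-1) := by
    rw [← pow_succ']; congr 1; omega
  have hpow2 : (2:ℝ)^(N+1) = 2^k * (2*M) := by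
    rw [hk2]; nlinarith [hpow]
  have hkey : x * (4*M) = (2*(n:ℝ) - 1) - (2*(p:ℝ)+1)*(2*M) := by
    calc x * (4*M) = (tpt N n - Ppt k (p+1)) * ((2:ℝ)^(k-1)*(4*(M:ℝ))) := by rw [hx]; ring
      _ = (tpt N n - Ppt k (p+1)) * 2^(N+1) := by
          rw [show (2:ℝ)^(k-1)*(4*(M:ℝ)) = 4*(M:ℝ)*2^(k-1) from by ring, hpow]
      _ = (2*(n:ℝ) - 1) - (2*(p:ℝ)+1)*(2*M) := by
          rw [tpt, Ppt, hpow2]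
          have hM0 : (M:ℝ) ≠ 0 := ne_of_gt hMpos
          push_cast
          field_simp
          ring
  clear_value x M
  clear hx hM hpow hpow2 hk2
  have hC1 : (0 < x ∧ x < 1/2) ↔ ((2*p+1)*M < n ∧ n ≤ (2*p+2)*M) := by
    constructor
    · rintro ⟨h1, h2⟩
      have e1 : (0:ℝ) < (2*(n:ℝ) - 1) - (2*(p:ℝ)+1)*(2*M) := by nlinarith
      have e2 : (2*(n:ℝ) - 1) - (2*(p:ℝ)+1)*(2*M) < 2*M := by nlinarith
      have n1 : (2*((2*p+1)*M) : ℕ) < 2*n := by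
        have : (2*((2*p+1)*(M:ℝ))) < 2*n := by push_cast; nlinarith
        exact_mod_cast this
      have n2 : (2*n : ℕ) < 2*((2*p+2)*M) + 1 := by
        have : (2*(n:ℝ)) < 2*((2*p+2)*(M:ℝ)) + 1 := by push_cast; nlinarith
        exact_mod_cast this
      omega
    · rintro ⟨h1, h2⟩
      have e1 : ((2*p+1)*(M:ℝ)) + 1 ≤ n := by exact_mod_cast h1
      have e2 : (n:ℝ) ≤ (2*p+2)*(M:ℝ) := by exact_mod_cast h2
      constructor
      · nlinarith
      · nlinarith
  have hC2 : (-(1/2) < x ∧ x < 0) ↔ (2*p*M < n ∧ n ≤ (2*p+1)*M) := by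
    constructor
    · rintro ⟨h1, h2⟩
      have n1 : (2*(2*p*M) : ℕ) < 2*n := by
        have : (2*(2*(p:ℝ)*(M:ℝ))) < 2*n := by push_cast; nlinarith
        exact_mod_cast this
      have n2 : (2*n : ℕ) < 2*((2*p+1)*M) + 1 := by
        have : (2*(n:ℝ)) < 2*((2*p+1)*(M:ℝ)) + 1 := by push_cast; nlinarith
        exact_mod_cast this
      omega
    · rintro ⟨h1, h2⟩
      have e1 : (2*(p:ℝ)*(M:ℝ)) + 1 ≤ n := by exact_mod_cast h1
      have e2 : (n:ℝ) ≤ (2*p+1)*(M:ℝ) := by exact_mod_cast h2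
      constructor
      · nlinarith
      · nlinarith
  rw [haar11]
  simp only [hC1, hC2]

lemma Icc_one_eq_Ioc (m : ℕ) : Finset.Icc 1 m = Finset.Ioc 0 m := by
  ext x; simp [Finset.mem_Icc, Finset.mem_Ioc]; omega

lemma H0diff (N : ℕ) (f g : ℕ → ℝ) :
    Htrans N f 0 1 - Htrans N g 0 1 = (1/2^N) * ∑ n ∈ Finset.Ioc 0 (2^N), (f n - g n) := by
  rw [Htrans, Htrans, innerOmega, innerOmega, ← mul_sub, ← Finset.sum_sub_distrib,
    Icc_one_eq_Ioc]
  congr 1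
  refine Finset.sum_congr rfl fun n _ => ?_
  simp [haar]

lemma Hkdiff (N k p : ℕ) (f g : ℕ → ℝ) (hk1 : 1 ≤ k) (hkN : k ≤ N) (hp : p < 2^(k-1)) :
    Htrans N f k (p+1) - Htrans N g k (p+1)
      = (1/2^N) * ((2:ℝ)^(((k:ℝ)-1)/2) *
          ((∑ n ∈ Finset.Ioc ((2*p+1)*2^(N-k)) ((2*p+2)*2^(N-k)), (f n - g n))
           - ∑ n ∈ Finset.Ioc (2*p*2^(N-k)) ((2*p+1)*2^(N-k)), (f n - g n))) := by
  set M : ℕ := 2^(N-k) with hM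
  have h2k : 2^k = 2*2^(k-1) := by
    rw [← pow_succ']; congr 1; omega
  have hCb : (2*p+2)*M ≤ 2^N := by
    calc (2*p+2)*M ≤ 2^k*M := Nat.mul_le_mul_right M (by omega)
      _ = 2^N := by rw [hM, ← pow_add]; congr 1; omega
  rw [Htrans, Htrans, innerOmega, innerOmega, ← mul_sub, ← Finset.sum_sub_distrib,
    Icc_one_eq_Ioc]
  congr 1
  have step : ∀ n ∈ Finset.Ioc 0 (2^N),
      (fun n => haar k (p+1) (tpt N n)) n * f n - (fun n => haar k (p+1) (tpt N n)) n * g n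
      = (2:ℝ)^(((k:ℝ)-1)/2) *
          ((if (2*p+1)*M < n ∧ n ≤ (2*p+2)*M then 1
             else if 2*p*M < n ∧ n ≤ (2*p+1)*M then (-1:ℝ) else 0) * (f n - g n)) := by
    intro n hn
    simp only [Finset.mem_Ioc] at hn
    simp only
    rw [← mul_sub, haar_val N k p n hk1 hkN (by omega), hM]
    ring
  rw [Finset.sum_congr rfl step, ← Finset.mul_sum]
  congr 1
  have hsplit1 : ∀ (F : ℕ → ℝ), (∑ n ∈ Finset.Ioc 0 (2*p*M), F n)
      + (∑ n ∈ Finset.Ioc (2*p*M) ((2*p+1)*M), F n)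
      + (∑ n ∈ Finset.Ioc ((2*p+1)*M) ((2*p+2)*M), F n)
      + (∑ n ∈ Finset.Ioc ((2*p+2)*M) (2^N), F n) = ∑ n ∈ Finset.Ioc 0 (2^N), F n := by
    intro F
    rw [Finset.sum_Ioc_consecutive F (Nat.zero_le _) (Nat.mul_le_mul_right M (by omega)),
      Finset.sum_Ioc_consecutive F (Nat.zero_le _) (Nat.mul_le_mul_right M (by omega)),
      Finset.sum_Ioc_consecutive F (Nat.zero_le _) hCb]
  rw [← hsplit1]
  have hAB : 2*p*M + M = (2*p+1)*M := by ring
  have hBC : (2*p+1)*M + M = (2*p+2)*M := by ring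
  have z1 : (∑ n ∈ Finset.Ioc 0 (2*p*M),
      (if (2*p+1)*M < n ∧ n ≤ (2*p+2)*M then (1:ℝ)
        else if 2*p*M < n ∧ n ≤ (2*p+1)*M then (-1:ℝ) else 0) * (f n - g n)) = 0 := by
    refine Finset.sum_eq_zero fun n hn => ?_
    simp only [Finset.mem_Ioc] at hn
    rw [if_neg (by omega), if_neg (by omega)]; ring
  have z2 : (∑ n ∈ Finset.Ioc ((2*p+2)*M) (2^N),
      (if (2*p+1)*M < n ∧ n ≤ (2*p+2)*M then (1:ℝ)
        else if 2*p*M < n ∧ n ≤ (2*p+1)*M then (-1:ℝ) else 0) * (f n - g n)) = 0 := by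
    refine Finset.sum_eq_zero fun n hn => ?_
    simp only [Finset.mem_Ioc] at hn
    rw [if_neg (by omega), if_neg (by omega)]; ring
  have e1 : (∑ n ∈ Finset.Ioc (2*p*M) ((2*p+1)*M),
      (if (2*p+1)*M < n ∧ n ≤ (2*p+2)*M then (1:ℝ)
        else if 2*p*M < n ∧ n ≤ (2*p+1)*M then (-1:ℝ) else 0) * (f n - g n))
      = - ∑ n ∈ Finset.Ioc (2*p*M) ((2*p+1)*M), (f n - g n) := by
    rw [← Finset.sum_neg_distrib]
    refine Finset.sum_congr rfl fun n hn => ?_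
    simp only [Finset.mem_Ioc] at hn
    rw [if_neg (by omega), if_pos (by omega)]; ring
  have e2 : (∑ n ∈ Finset.Ioc ((2*p+1)*M) ((2*p+2)*M),
      (if (2*p+1)*M < n ∧ n ≤ (2*p+2)*M then (1:ℝ)
        else if 2*p*M < n ∧ n ≤ (2*p+1)*M then (-1:ℝ) else 0) * (f n - g n))
      = ∑ n ∈ Finset.Ioc ((2*p+1)*M) ((2*p+2)*M), (f n - g n) := by
    refine Finset.sum_congr rfl fun n hn => ?_
    simp only [Finset.mem_Ioc] at hn
    rw [if_pos (by omega)]; ring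
  rw [z1, z2, e1, e2]
  ring

lemma rpow_split (N k : ℕ) :
    (2:ℝ) ^ (-(N:ℝ) + ((k:ℝ) - 1)/2) = (1/2^N) * (2:ℝ)^(((k:ℝ)-1)/2) := by
  rw [Real.rpow_add (by norm_num : (0:ℝ) < 2), Real.rpow_neg (by norm_num : (0:ℝ) ≤ 2),
    Real.rpow_natCast, one_div]

lemma rpow_base (N : ℕ) :
    (2:ℝ) ^ (-(N:ℝ) - 1) = (1/2^N) * (1/2) := by
  rw [show -(N:ℝ) - 1 = (-(N:ℝ)) + (-1) from by ring,
    Real.rpow_add (by norm_num : (0:ℝ) < 2), Real.rpow_neg (by norm_num : (0:ℝ) ≤ 2),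
    Real.rpow_natCast]
  norm_num

lemma blocks (N : ℕ) (d : ℕ → ℝ)
    (h0' : |∑ n ∈ Finset.Ioc 0 (2^N), d n| ≤ 1/2)
    (h' : ∀ k p : ℕ, 1 ≤ k → k ≤ N → p < 2^(k-1) →
       |(∑ n ∈ Finset.Ioc ((2*p+1)*2^(N-k)) ((2*p+2)*2^(N-k)), d n)
         - ∑ n ∈ Finset.Ioc (2*p*2^(N-k)) ((2*p+1)*2^(N-k)), d n| ≤ 1) :
    ∀ k, k ≤ N → ∀ q, q < 2^k →
       |∑ n ∈ Finset.Ioc (q*2^(N-k)) ((q+1)*2^(N-k)), d n| ≤ 1 - (1/2:ℝ)^(k+1) := by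
  intro k
  induction k with
  | zero =>
    intro _ q hq
    have : q = 0 := by omega
    subst this
    norm_num
    linarith [h0']
  | succ k ih =>
    intro hk q hq
    set M : ℕ := 2^(N-(k+1)) with hM
    have hNk : 2^(N-k) = 2*M := by
      rw [hM, ← pow_succ']; congr 1; omega
    set p : ℕ := q/2 with hp
    have hp2 : p < 2^k := by
      have h2 : 2^(k+1) = 2*2^k := by rw [← pow_succ']
      omega
    have hparent := ih (by omega) p hp2
    have hdiff := h' (k+1) p (by omega) hk (by simpa using hp2)
    rw [← hM] at hdiff
    rw [hNk] at hparent
    have hsplit : (∑ n ∈ Finset.Ioc ((2*p)*M) ((2*p+1)*M), d n)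
        + ∑ n ∈ Finset.Ioc ((2*p+1)*M) ((2*p+2)*M), d n
        = ∑ n ∈ Finset.Ioc (p*(2*M)) ((p+1)*(2*M)), d n := by
      rw [show p*(2*M) = 2*p*M from by ring, show (p+1)*(2*M) = (2*p+2)*M from by ring]
      exact Finset.sum_Ioc_consecutive d (Nat.mul_le_mul_right M (by omega))
        (Nat.mul_le_mul_right M (by omega))
    set L : ℝ := ∑ n ∈ Finset.Ioc ((2*p)*M) ((2*p+1)*M), d n with hL
    set R : ℝ := ∑ n ∈ Finset.Ioc ((2*p+1)*M) ((2*p+2)*M), d n with hR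
    rw [← hsplit] at hparent
    have hpow2 : (1/2:ℝ)^(k+1+1) = (1/2:ℝ)^(k+1)/2 := by ring
    rcases Nat.even_or_odd q with he | ho
    · have hq2 : q = 2*p := by
        rcases he with ⟨r, hr⟩; omega
      have : (∑ n ∈ Finset.Ioc (q*2^(N-(k+1))) ((q+1)*2^(N-(k+1))), d n) = L := by
        rw [hL, hq2, ← hM]
      rw [this, hpow2]
      have habs : |2*L| ≤ |L + R| + |R - L| := by
        have : 2*L = (L + R) - (R - L) := by ring
        rw [this]
        exact abs_sub _ _
      rw [abs_mul] at habs
      have : |(2:ℝ)| = 2 := by norm_num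
      rw [this] at habs
      linarith
    · have hq2 : q = 2*p + 1 := by
        rcases ho with ⟨r, hr⟩; omega
      have : (∑ n ∈ Finset.Ioc (q*2^(N-(k+1))) ((q+1)*2^(N-(k+1))), d n) = R := by
        rw [hR, hq2, ← hM, show (2*p+1+1) = 2*p+2 from rfl]
      rw [this, hpow2]
      have habs : |2*R| ≤ |L + R| + |R - L| := by
        have : 2*R = (L + R) + (R - L) := by ring
        rw [this]
        exact abs_add_le _ _
      rw [abs_mul] at habs
      have : |(2:ℝ)| = 2 := by norm_num
      rw [this] at habs
      linarith

lemma geom_two (N : ℕ) : ∑ k ∈ Finset.Icc 1 N, (2:ℝ)^k = 2^(N+1) - 2 := by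
  induction N with
  | zero => simp
  | succ n ih =>
    rw [Finset.sum_Icc_succ_top (by omega : 1 ≤ n+1), ih]
    ring

lemma eq_part (N : ℕ) :
    (2:ℝ) ^ (-(N:ℝ) - 1) + (∑ k ∈ Finset.Icc 1 N, (2:ℝ) ^ (-(N:ℝ) + (k:ℝ) - 1)) =
      1 - (2:ℝ) ^ (-(N:ℝ) - 1) := by
  have hterm : ∀ k:ℕ, (2:ℝ)^(-(N:ℝ)+(k:ℝ)-1) = (2:ℝ)^(-(N:ℝ)-1) * 2^k := by
    intro k
    rw [show -(N:ℝ)+(k:ℝ)-1 = (-(N:ℝ)-1) + (k:ℝ) from by ring,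
      Real.rpow_add (by norm_num : (0:ℝ) < 2), Real.rpow_natCast]
  have hpowN : (2:ℝ)^(-(N:ℝ)-1) * 2^(N+1) = 1 := by
    rw [← Real.rpow_natCast 2 (N+1), ← Real.rpow_add (by norm_num : (0:ℝ) < 2)]
    rw [show -(N:ℝ)-1 + ((N:ℕ)+1 : ℕ) = 0 from by push_cast; ring, Real.rpow_zero]
  simp only [hterm]
  rw [← Finset.mul_sum, geom_two]
  linear_combination hpowN


/-- **Uniform error bound from Haar coefficient bounds.** If
`|Hf[0,1] − Hg[0,1]| ≤ 2^{−N−1}` and `|Hf[k,j] − Hg[k,j]| ≤ 2^{−N+(k−1)/2}` for all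
`(k,j) ∈ Ω̂` with `k ≥ 1`, then
`sup_{t∈Ω} |f(t) − g(t)| ≤ 2^{−N−1} + ∑_{k=1}^N 2^{−N+k−1} = 1 − 2^{−N−1}`. -/
theorem uniform_error_bound (N : ℕ) (f g : ℕ → ℝ)
    (h0 : |Htrans N f 0 1 - Htrans N g 0 1| ≤ (2:ℝ) ^ (-(N:ℝ) - 1))
    (h : ∀ k j : ℕ, 1 ≤ k → k ≤ N → 1 ≤ j → j ≤ 2^(k-1) →
      |Htrans N f k j - Htrans N g k j| ≤ (2:ℝ) ^ (-(N:ℝ) + ((k:ℝ) - 1)/2)) :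
    (∀ n ∈ Finset.Icc 1 (2^N),
      |f n - g n| ≤ (2:ℝ) ^ (-(N:ℝ) - 1) + ∑ k ∈ Finset.Icc 1 N, (2:ℝ) ^ (-(N:ℝ) + (k:ℝ) - 1)) ∧
    (2:ℝ) ^ (-(N:ℝ) - 1) + (∑ k ∈ Finset.Icc 1 N, (2:ℝ) ^ (-(N:ℝ) + (k:ℝ) - 1)) =
      1 - (2:ℝ) ^ (-(N:ℝ) - 1) := by
  refine ⟨?_, eq_part N⟩
  intro n hn
  simp only [Finset.mem_Icc] at hn
  set d : ℕ → ℝ := fun n => f n - g n with hd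
  have hNpos : (0:ℝ) < 1/2^N := by positivity
  have h0' : |∑ n ∈ Finset.Ioc 0 (2^N), d n| ≤ 1/2 := by
    have := h0
    rw [H0diff, rpow_base, abs_mul, abs_of_pos hNpos] at this
    exact le_of_mul_le_mul_left this hNpos
  have h' : ∀ k p : ℕ, 1 ≤ k → k ≤ N → p < 2^(k-1) →
      |(∑ n ∈ Finset.Ioc ((2*p+1)*2^(N-k)) ((2*p+2)*2^(N-k)), d n)
        - ∑ n ∈ Finset.Ioc (2*p*2^(N-k)) ((2*p+1)*2^(N-k)), d n| ≤ 1 := by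
    intro k p hk1 hkN hp
    have hc : (0:ℝ) < (2:ℝ)^(((k:ℝ)-1)/2) := Real.rpow_pos_of_pos (by norm_num) _
    have hh := h k (p+1) hk1 hkN (by omega) (by omega)
    rw [Hkdiff N k p f g hk1 hkN hp, rpow_split, abs_mul, abs_of_pos hNpos,
      abs_mul, abs_of_pos hc] at hh
    have h1 := le_of_mul_le_mul_left hh hNpos
    have h2 := le_of_mul_le_mul_left (by linarith : (2:ℝ)^(((k:ℝ)-1)/2) *
      |(∑ n ∈ Finset.Ioc ((2*p+1)*2^(N-k)) ((2*p+2)*2^(N-k)), d n)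
        - ∑ n ∈ Finset.Ioc (2*p*2^(N-k)) ((2*p+1)*2^(N-k)), d n|
      ≤ (2:ℝ)^(((k:ℝ)-1)/2) * 1) hc
    exact h2
  have hb := blocks N d h0' h' N le_rfl (n-1) (by omega)
  have hIoc : Finset.Ioc ((n-1)*2^(N-N)) ((n-1+1)*2^(N-N)) = {n} := by
    ext x
    simp only [Finset.mem_Ioc, Finset.mem_singleton, Nat.sub_self, pow_zero, mul_one]
    omega
  rw [hIoc, Finset.sum_singleton] at hb
  rw [eq_part N]
  have hconv : ((1:ℝ)/2)^(N+1) = (2:ℝ)^(-(N:ℝ)-1) := by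
    rw [rpow_base, pow_succ, div_pow, one_pow]
  rw [← hconv]
  exact hb
end
end
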